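/- Fix a real α with 0 < α < 1/2 and a real τ > 0. For an integer d ≥ 1, a real T > 0 and a real φ ∈ [1, d], define r_d(T, φ) = ( Σ_{k=1}^{⌊φ⌋} (k^{−α} − φ^{−α})² + Σ_{k=⌊φ⌋+1}^{d} φ^{−2α}/(4T²) ) / Σ_{k=1}^{d} k^{−2α}. Then: (i) for every x ∈ (0, 1], lim_{d→∞} r_d(τ, d·x) = f_τ(x), where f_τ(x) = (1−2α)·[ (1 + 1/(1−2α) − 2/(1−α) − 1/(4τ²))·x^{1−2α} + x^{−2α}/(4τ²) ]; (ii) if 4τ² ≤ (1−α)/(2α²), then the minimum of f_τ over (0, 1] is attained at x = 1 with value 2α²/(1−α); (iii) if 4τ² > (1−α)/(2α²), then the minimum of f_τ over (0, 1] is attained uniquely at x* = (1 − 1/(2α) + 4τ²·α/(1−α))^{−1}, with value (1 − 1/(2α) + 4τ²·α/(1−α))^{2α}/(4τ²). -/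

import Mathlib

open Filter

namespace Stmt15Aux
open Real

lemma icc_sum_eq (g : ℕ → ℝ) (m n : ℕ) :
    ∑ k ∈ Finset.Icc m n, g k = ∑ i ∈ Finset.range (n + 1 - m), g (m + i) := by
  rw [← Finset.Ico_add_one_right_eq_Icc, Finset.sum_Ico_eq_sum_range]

lemma sum_rpow_lower {s : ℝ} (hs0 : 0 ≤ s) (hs1 : s < 1) (n : ℕ) :
    (((n : ℝ) + 1) ^ (1 - s) - 1) / (1 - s) ≤ ∑ k ∈ Finset.Icc 1 n, (k : ℝ) ^ (-s) := by
  have h1s : (0:ℝ) < 1 - s := by linarith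
  have hint : ∫ t in (1:ℝ)..(1 + n), t ^ (-s) = (((n:ℝ)+1) ^ (1-s) - 1)/(1-s) := by
    rw [integral_rpow (Or.inl (by linarith))]
    rw [Real.one_rpow]
    ring_nf
  have hanti : AntitoneOn (fun t : ℝ => t ^ (-s)) (Set.Icc 1 (1 + n)) := by
    intro a ha b hb hab
    exact Real.rpow_le_rpow_of_nonpos (by linarith [ha.1]) hab (neg_nonpos.mpr hs0)
  have := hanti.integral_le_sum
  rw [hint] at this
  refine this.trans_eq ?_
  rw [icc_sum_eq (fun k => (k:ℝ) ^ (-s))]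
  simp only [Nat.add_sub_cancel]
  apply Finset.sum_congr rfl
  intro i _
  push_cast
  ring_nf

lemma sum_rpow_upper {s : ℝ} (hs0 : 0 ≤ s) (hs1 : s < 1) (n : ℕ) :
    ∑ k ∈ Finset.Icc 1 n, (k : ℝ) ^ (-s) ≤ 1 + (((n : ℝ) + 1) ^ (1 - s) - 1) / (1 - s) := by
  have h1s : (0:ℝ) < 1 - s := by linarith
  have hint : ∫ t in (1:ℝ)..(1 + n), t ^ (-s) = (((n:ℝ)+1) ^ (1-s) - 1)/(1-s) := by
    rw [integral_rpow (Or.inl (by linarith))]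
    rw [Real.one_rpow]
    ring_nf
  have hanti : AntitoneOn (fun t : ℝ => t ^ (-s)) (Set.Icc 1 (1 + n)) := by
    intro a ha b hb hab
    exact Real.rpow_le_rpow_of_nonpos (by linarith [ha.1]) hab (neg_nonpos.mpr hs0)
  have hle := hanti.sum_le_integral
  rw [hint] at hle
  rcases Nat.eq_zero_or_pos n with h0 | hn
  · subst h0
    norm_num [Real.one_rpow]
  have hsplit : Finset.Icc 1 n = insert 1 (Finset.Icc 2 n) := by
    ext k; simp only [Finset.mem_Icc, Finset.mem_insert]; omega
  rw [hsplit, Finset.sum_insert (by simp)]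
  have h2 : ∑ k ∈ Finset.Icc 2 n, (k:ℝ) ^ (-s) ≤ ∑ k ∈ Finset.Icc 2 (n+1), (k:ℝ) ^ (-s) :=
    Finset.sum_le_sum_of_subset_of_nonneg (Finset.Icc_subset_Icc_right (by omega))
      (fun k _ _ => Real.rpow_nonneg (Nat.cast_nonneg k) _)
  have h3 : ∑ k ∈ Finset.Icc 2 (n+1), (k:ℝ) ^ (-s)
      = ∑ i ∈ Finset.range n, ((1:ℝ) + (↑(i + 1))) ^ (-s) := by
    rw [icc_sum_eq (fun k => (k:ℝ) ^ (-s))]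
    simp only [show n + 1 + 1 - 2 = n from by omega]
    apply Finset.sum_congr rfl
    intro i _
    push_cast
    ring_nf
  have h1 : ((1:ℕ):ℝ) ^ (-s) = 1 := by norm_num
  rw [h1]
  linarith [h2.trans (h3 ▸ hle)]

lemma sum_rpow_asymp {s : ℝ} (hs0 : 0 ≤ s) (hs1 : s < 1) :
    Tendsto (fun n : ℕ => (∑ k ∈ Finset.Icc 1 n, (k : ℝ) ^ (-s)) / (n : ℝ) ^ (1 - s))
      atTop (nhds (1 / (1 - s))) := by
  have h1s : (0:ℝ) < 1 - s := by linarith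
  have ha : Tendsto (fun n : ℕ => ((n:ℝ)+1) ^ (1-s) / (n:ℝ) ^ (1-s)) atTop (nhds 1) := by
    have h1 : Tendsto (fun n : ℕ => ((n:ℝ)+1)/(n:ℝ)) atTop (nhds 1) := by
      have := (tendsto_inv_atTop_zero.comp (tendsto_natCast_atTop_atTop (R := ℝ))).const_add 1
      rw [add_zero] at this
      refine this.congr' ?_
      filter_upwards [eventually_ge_atTop 1] with n hn
      have : (n:ℝ) ≠ 0 := by positivity
      simp only [Function.comp_apply]
      field_simp
    have h2 : Tendsto (fun y : ℝ => y ^ (1-s)) (nhds 1) (nhds 1) := by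
      have := (Real.continuousAt_rpow_const 1 (1-s) (Or.inl one_ne_zero)).tendsto
      rwa [Real.one_rpow] at this
    have h3 := h2.comp h1
    refine h3.congr' ?_
    filter_upwards [eventually_ge_atTop 1] with n hn
    have hn' : (0:ℝ) < n := by exact_mod_cast hn
    simp only [Function.comp_apply]
    rw [Real.div_rpow (by positivity) (le_of_lt hn')]
  have hb : Tendsto (fun n : ℕ => ((n:ℝ) ^ (1-s))⁻¹) atTop (nhds 0) := by
    have := (tendsto_rpow_neg_atTop h1s).comp (tendsto_natCast_atTop_atTop (R := ℝ))
    refine this.congr' ?_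
    filter_upwards [eventually_ge_atTop 1] with n hn
    have hn' : (0:ℝ) ≤ n := Nat.cast_nonneg n
    simp only [Function.comp_apply]
    rw [Real.rpow_neg hn']
  have hlow : Tendsto (fun n : ℕ => (((n:ℝ)+1) ^ (1-s) - 1) / (1-s) / (n:ℝ) ^ (1-s))
      atTop (nhds (1/(1-s))) := by
    have := (ha.sub hb).div_const (1-s)
    rw [sub_zero] at this
    refine this.congr (fun n => by ring)
  have hupp : Tendsto (fun n : ℕ => (1 + (((n:ℝ)+1) ^ (1-s) - 1) / (1-s)) / (n:ℝ) ^ (1-s))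
      atTop (nhds (1/(1-s))) := by
    have := hb.add ((ha.sub hb).div_const (1-s))
    rw [zero_add, sub_zero] at this
    refine this.congr (fun n => by ring)
  refine tendsto_of_tendsto_of_tendsto_of_le_of_le' hlow hupp ?_ ?_
  · filter_upwards [eventually_ge_atTop 1] with n hn
    have hn' : (0:ℝ) < (n:ℝ) ^ (1-s) := by
      have : (0:ℝ) < n := by exact_mod_cast hn
      positivity
    exact (div_le_div_iff_of_pos_right hn').mpr (sum_rpow_lower hs0 hs1 n)
  · filter_upwards [eventually_ge_atTop 1] with n hn
    have hn' : (0:ℝ) < (n:ℝ) ^ (1-s) := by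
      have : (0:ℝ) < n := by exact_mod_cast hn
      positivity
    exact (div_le_div_iff_of_pos_right hn').mpr (sum_rpow_upper hs0 hs1 n)

lemma rpow_neg_two_mul {x α : ℝ} (hx : 0 ≤ x) : x ^ (-(2*α)) = (x ^ (-α))^2 := by
  rw [show -(2*α) = (-α)*2 by ring, Real.rpow_mul hx, Real.rpow_two]

set_option maxHeartbeats 2000000 in
lemma part1 (α τ x : ℝ) (hα0 : 0 < α) (hα1 : α < 1/2) (hτ : 0 < τ)
    (hx0 : 0 < x) (hx1 : x ≤ 1) :
    Tendsto (fun d : ℕ =>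
      ((∑ k ∈ Finset.Icc 1 ⌊(d:ℝ)*x⌋₊, ((k : ℝ) ^ (-α) - ((d:ℝ)*x) ^ (-α)) ^ 2) +
        ∑ k ∈ Finset.Icc (⌊(d:ℝ)*x⌋₊ + 1) d, ((d:ℝ)*x) ^ (-(2 * α)) / (4 * τ ^ 2)) /
      (∑ k ∈ Finset.Icc 1 d, (k : ℝ) ^ (-(2 * α))))
      atTop (nhds ((1 - 2 * α) * ((1 + 1 / (1 - 2 * α) - 2 / (1 - α) - 1 / (4 * τ ^ 2)) *
          x ^ (1 - 2 * α) + x ^ (-(2 * α)) / (4 * τ ^ 2)))) := by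
  have h2α : 2 * α < 1 := by linarith
  have hα1' : α < 1 := by linarith
  set m : ℕ → ℕ := fun d => ⌊(d:ℝ)*x⌋₊ with hm_def
  set S1 : ℕ → ℝ := fun n => ∑ k ∈ Finset.Icc 1 n, (k : ℝ) ^ (-α) with hS1_def
  set S2 : ℕ → ℝ := fun n => ∑ k ∈ Finset.Icc 1 n, (k : ℝ) ^ (-(2*α)) with hS2_def
  -- basic tendsto facts
  have hdx_top : Tendsto (fun d : ℕ => (d:ℝ)*x) atTop atTop :=
    (tendsto_natCast_atTop_atTop (R := ℝ)).atTop_mul_const hx0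
  have hm_top : Tendsto m atTop atTop := tendsto_nat_floor_atTop.comp hdx_top
  have hq : Tendsto (fun d : ℕ => (m d : ℝ)/(d:ℝ)) atTop (nhds x) := by
    have h1 := (tendsto_nat_floor_div_atTop (R := ℝ)).comp hdx_top
    have h2 := h1.mul_const x
    rw [one_mul] at h2
    refine h2.congr' ?_
    filter_upwards [eventually_ge_atTop 1] with d hd
    have hd0 : (0:ℝ) < d := by exact_mod_cast hd
    simp only [Function.comp_apply]
    field_simp
    simp only [hm_def]
  -- the four terms
  set T1 : ℕ → ℝ := fun d => S2 (m d) / (d:ℝ)^(1-2*α) with hT1_def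
  set T2 : ℕ → ℝ := fun d => ((d:ℝ)*x)^(-α) * S1 (m d) / (d:ℝ)^(1-2*α) with hT2_def
  set T3 : ℕ → ℝ := fun d => (m d : ℝ) * ((d:ℝ)*x)^(-(2*α)) / (d:ℝ)^(1-2*α) with hT3_def
  set T4 : ℕ → ℝ := fun d =>
    ((d:ℝ) - (m d : ℝ)) * (((d:ℝ)*x)^(-(2*α)) / (4*τ^2)) / (d:ℝ)^(1-2*α) with hT4_def
  set H : ℕ → ℝ := fun d => S2 d / (d:ℝ)^(1-2*α) with hH_def
  have hev : ∀ᶠ d : ℕ in atTop, 1 ≤ d ∧ 1 ≤ m d :=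
    (eventually_ge_atTop 1).and (hm_top.eventually_ge_atTop 1)
  -- limits of the four terms
  have hc12 : ContinuousAt (fun y : ℝ => y ^ (1-2*α)) x :=
    Real.continuousAt_rpow_const x _ (Or.inl hx0.ne')
  have hc1 : ContinuousAt (fun y : ℝ => y ^ (1-α)) x :=
    Real.continuousAt_rpow_const x _ (Or.inl hx0.ne')
  have hq12 : Tendsto (fun d : ℕ => ((m d : ℝ)/(d:ℝ)) ^ (1-2*α)) atTop (nhds (x ^ (1-2*α))) :=
    (hc12.tendsto).comp hq
  have hq1 : Tendsto (fun d : ℕ => ((m d : ℝ)/(d:ℝ)) ^ (1-α)) atTop (nhds (x ^ (1-α))) :=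
    (hc1.tendsto).comp hq
  have hu2 : Tendsto (fun d : ℕ => S2 (m d) / (m d : ℝ)^(1-2*α)) atTop (nhds (1/(1-2*α))) :=
    (sum_rpow_asymp (by positivity) h2α).comp hm_top
  have hu1 : Tendsto (fun d : ℕ => S1 (m d) / (m d : ℝ)^(1-α)) atTop (nhds (1/(1-α))) :=
    (sum_rpow_asymp (le_of_lt hα0) hα1').comp hm_top
  have hT1 : Tendsto T1 atTop (nhds ((1/(1-2*α)) * x^(1-2*α))) := by
    refine (hu2.mul hq12).congr' ?_
    filter_upwards [hev] with d ⟨hd1, hm1⟩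
    have hd0 : (0:ℝ) < d := by exact_mod_cast hd1
    have hm0 : (0:ℝ) < m d := by exact_mod_cast hm1
    have hP : (m d : ℝ)^(1-2*α) ≠ 0 := by positivity
    rw [Real.div_rpow (le_of_lt hm0) (le_of_lt hd0)]
    simp only [hT1_def]
    field_simp
  have hT2 : Tendsto T2 atTop (nhds (x^(-α) * ((1/(1-α)) * x^(1-α)))) := by
    refine ((hu1.mul hq1).const_mul (x^(-α))).congr' ?_
    filter_upwards [hev] with d ⟨hd1, hm1⟩
    have hd0 : (0:ℝ) < d := by exact_mod_cast hd1
    have hm0 : (0:ℝ) < m d := by exact_mod_cast hm1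
    have hφ : ((d:ℝ)*x)^(-α) = (d:ℝ)^(-α) * x^(-α) :=
      Real.mul_rpow (le_of_lt hd0) (le_of_lt hx0)
    have hd1' : (d:ℝ)^(1-2*α) = (d:ℝ)^(-α) * (d:ℝ)^(1-α) := by
      rw [show (1:ℝ)-2*α = -α + (1-α) by ring, Real.rpow_add hd0]
    simp only [hT2_def]
    rw [Real.div_rpow (le_of_lt hm0) (le_of_lt hd0), hφ, hd1']
    have hP : (m d : ℝ)^(1-α) ≠ 0 := by positivity
    have hDa : (d:ℝ)^(-α) ≠ 0 := by positivity
    have hDb : (d:ℝ)^(1-α) ≠ 0 := by positivity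
    field_simp
  have hT3 : Tendsto T3 atTop (nhds (x * x^(-(2*α)))) := by
    refine (hq.mul_const (x^(-(2*α)))).congr' ?_
    filter_upwards [hev] with d ⟨hd1, hm1⟩
    have hd0 : (0:ℝ) < d := by exact_mod_cast hd1
    have hφ2 : ((d:ℝ)*x)^(-(2*α)) = (d:ℝ)^(-(2*α)) * x^(-(2*α)) :=
      Real.mul_rpow (le_of_lt hd0) (le_of_lt hx0)
    have hd2' : (d:ℝ)^(1-2*α) = (d:ℝ)^(-(2*α)) * (d:ℝ) := by
      rw [show (1:ℝ)-2*α = -(2*α) + 1 by ring, Real.rpow_add hd0, Real.rpow_one]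
    simp only [hT3_def]
    rw [hφ2, hd2']
    have hDa : (d:ℝ)^(-(2*α)) ≠ 0 := by positivity
    field_simp
  have hT4 : Tendsto T4 atTop (nhds ((1 - x) * (x^(-(2*α))/(4*τ^2)))) := by
    have hbase := ((tendsto_const_nhds (x := (1:ℝ)) (f := atTop (α := ℕ))).sub hq).mul_const
      (x^(-(2*α))/(4*τ^2))
    refine hbase.congr' ?_
    filter_upwards [hev] with d ⟨hd1, hm1⟩
    have hd0 : (0:ℝ) < d := by exact_mod_cast hd1
    have hφ2 : ((d:ℝ)*x)^(-(2*α)) = (d:ℝ)^(-(2*α)) * x^(-(2*α)) :=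
      Real.mul_rpow (le_of_lt hd0) (le_of_lt hx0)
    have hd2' : (d:ℝ)^(1-2*α) = (d:ℝ)^(-(2*α)) * (d:ℝ) := by
      rw [show (1:ℝ)-2*α = -(2*α) + 1 by ring, Real.rpow_add hd0, Real.rpow_one]
    simp only [hT4_def]
    rw [hφ2, hd2']
    have hDa : (d:ℝ)^(-(2*α)) ≠ 0 := by positivity
    have hτ' : (4:ℝ)*τ^2 ≠ 0 := by positivity
    field_simp
  have hH : Tendsto H atTop (nhds (1/(1-2*α))) := sum_rpow_asymp (by positivity) h2α
  -- combine
  have hG : Tendsto (fun d => T1 d - 2 * T2 d + T3 d + T4 d) atTop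
      (nhds ((1/(1-2*α)) * x^(1-2*α) - 2 * (x^(-α) * ((1/(1-α)) * x^(1-α)))
        + x * x^(-(2*α)) + (1 - x) * (x^(-(2*α))/(4*τ^2)))) :=
    ((hT1.sub (hT2.const_mul 2)).add hT3).add hT4
  have hne : (1:ℝ)/(1-2*α) ≠ 0 := by
    have : (0:ℝ) < 1 - 2*α := by linarith
    positivity
  have hdiv := hG.div hH hne
  -- identify the limit value
  have hval : ((1/(1-2*α)) * x^(1-2*α) - 2 * (x^(-α) * ((1/(1-α)) * x^(1-α)))
        + x * x^(-(2*α)) + (1 - x) * (x^(-(2*α))/(4*τ^2))) / (1/(1-2*α))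
      = (1 - 2 * α) * ((1 + 1 / (1 - 2 * α) - 2 / (1 - α) - 1 / (4 * τ ^ 2)) *
          x ^ (1 - 2 * α) + x ^ (-(2 * α)) / (4 * τ ^ 2)) := by
    have e1 : x ^ (-α) * x ^ (1-α) = x ^ (1-2*α) := by
      rw [← Real.rpow_add hx0]; ring_nf
    have e2 : x * x ^ (-(2*α)) = x ^ (1-2*α) := by
      nth_rewrite 1 [← Real.rpow_one x]
      rw [← Real.rpow_add hx0]; ring_nf
    have h12 : (1:ℝ) - 2*α ≠ 0 := by intro h; linarith [h]
    have h1α : (1:ℝ) - α ≠ 0 := by intro h; linarith [h]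
    have hτ' : (4:ℝ)*τ^2 ≠ 0 := by positivity
    have e1' : x ^ (-α) * ((1/(1-α)) * x^(1-α)) = (1/(1-α)) * x^(1-2*α) := by
      rw [mul_left_comm, e1]
    rw [e1', sub_mul, one_mul, mul_div_assoc', e2]
    field_simp
    ring
  rw [hval] at hdiv
  refine hdiv.congr' ?_
  filter_upwards [hev] with d ⟨hd1, hm1⟩
  have hd0 : (0:ℝ) < d := by exact_mod_cast hd1
  have hφ0 : (0:ℝ) < (d:ℝ)*x := by positivity
  have hmd : m d ≤ d := by
    have : (d:ℝ)*x ≤ d := by nlinarith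
    calc m d ≤ ⌊(d:ℝ)⌋₊ := Nat.floor_le_floor this
    _ = d := Nat.floor_natCast d
  -- numerator expansion
  have hA : ∑ k ∈ Finset.Icc 1 (m d), ((k : ℝ) ^ (-α) - ((d:ℝ)*x) ^ (-α)) ^ 2
      = S2 (m d) - 2 * ((d:ℝ)*x)^(-α) * S1 (m d) + (m d : ℝ) * ((d:ℝ)*x)^(-(2*α)) := by
    have hterm : ∀ k ∈ Finset.Icc 1 (m d), ((k : ℝ) ^ (-α) - ((d:ℝ)*x) ^ (-α)) ^ 2
        = (k:ℝ)^(-(2*α)) - 2 * ((d:ℝ)*x)^(-α) * (k:ℝ)^(-α) + ((d:ℝ)*x)^(-(2*α)) := by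
      intro k _
      rw [rpow_neg_two_mul (Nat.cast_nonneg k), rpow_neg_two_mul (le_of_lt hφ0)]
      ring
    rw [Finset.sum_congr rfl hterm]
    rw [Finset.sum_add_distrib, Finset.sum_sub_distrib, ← Finset.mul_sum,
      Finset.sum_const, Nat.card_Icc, nsmul_eq_mul]
    simp only [hS1_def, hS2_def, Nat.add_sub_cancel]
  have hB : ∑ k ∈ Finset.Icc (m d + 1) d, ((d:ℝ)*x) ^ (-(2 * α)) / (4 * τ ^ 2)
      = ((d:ℝ) - (m d:ℝ)) * (((d:ℝ)*x) ^ (-(2*α)) / (4 * τ ^ 2)) := by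
    rw [Finset.sum_const, Nat.card_Icc, nsmul_eq_mul]
    congr 1
    have : d + 1 - (m d + 1) = d - m d := by omega
    rw [this, Nat.cast_sub hmd]
  have hε : (d:ℝ)^(1-2*α) ≠ 0 := by positivity
  have hnum : T1 d - 2 * T2 d + T3 d + T4 d
      = (S2 (m d) - 2 * ((d:ℝ)*x)^(-α) * S1 (m d) + (m d:ℝ) * ((d:ℝ)*x)^(-(2*α))
          + ((d:ℝ) - (m d:ℝ)) * (((d:ℝ)*x)^(-(2*α))/(4*τ^2))) / (d:ℝ)^(1-2*α) := by
    simp only [hT1_def, hT2_def, hT3_def, hT4_def]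
    ring
  simp only [Pi.div_apply]
  rw [hnum]
  simp only [hH_def]
  rw [div_div_div_comm, div_self hε, div_one, hA, hB]

lemma hkey_id (α τ : ℝ) (hα0 : 0 < α) (hα1 : α < 1/2) (hτ : 0 < τ) :
    (1-2*α)*(1 + 1/(1-2*α) - 2/(1-α) - 1/(4*τ^2))
      = 2*α*(1/(4*τ^2))*(1 - 1/(2*α) + 4*τ^2*α/(1-α)) := by
  have h1 : (1:ℝ) - 2*α ≠ 0 := by intro h; linarith
  have h2 : (1:ℝ) - α ≠ 0 := by intro h; linarith
  have h3 : (4:ℝ)*τ^2 ≠ 0 := by positivity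
  have h4 : α ≠ 0 := ne_of_gt hα0
  field_simp
  ring

lemma fDeriv (α τ x : ℝ) (hα0 : 0 < α) (hα1 : α < 1/2) (hτ : 0 < τ) (hx : 0 < x) :
    HasDerivAt (fun y : ℝ => (1 - 2 * α) * ((1 + 1 / (1 - 2 * α) - 2 / (1 - α) - 1 / (4 * τ ^ 2)) *
          y ^ (1 - 2 * α) + y ^ (-(2 * α)) / (4 * τ ^ 2)))
      ((1-2*α) * (2*α) * (1/(4*τ^2)) * x^(-(2*α)-1)
        * ((1 - 1/(2*α) + 4*τ^2*α/(1-α))*x - 1)) x := by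
  have h1 : HasDerivAt (fun y : ℝ => y ^ (1-2*α)) ((1-2*α) * x^(1-2*α-1)) x :=
    Real.hasDerivAt_rpow_const (Or.inl hx.ne')
  have h2 : HasDerivAt (fun y : ℝ => y ^ (-(2*α))) ((-(2*α)) * x^(-(2*α)-1)) x :=
    Real.hasDerivAt_rpow_const (Or.inl hx.ne')
  have h := ((h1.const_mul (1 + 1/(1-2*α) - 2/(1-α) - 1/(4*τ^2))).add
    (h2.div_const (4*τ^2))).const_mul (1-2*α)
  refine h.congr_deriv ?_
  symm
  have e : x ^ (1-2*α-1) = x^(-(2*α)-1) * x := by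
    rw [show (1:ℝ)-2*α-1 = (-(2*α)-1)+1 by ring, Real.rpow_add hx, Real.rpow_one]
  rw [e]
  have hkey := hkey_id α τ hα0 hα1 hτ
  linear_combination (-(x^(-(2*α)-1) * x * (1-2*α))) * hkey

lemma fAnti (α τ b : ℝ) (hα0 : 0 < α) (hα1 : α < 1/2) (hτ : 0 < τ) (hb : 0 < b)
    (hcb : (1 - 1/(2*α) + 4*τ^2*α/(1-α)) * b ≤ 1) :
    StrictAntiOn (fun y : ℝ => (1 - 2 * α) * ((1 + 1 / (1 - 2 * α) - 2 / (1 - α) - 1 / (4 * τ ^ 2)) *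
          y ^ (1 - 2 * α) + y ^ (-(2 * α)) / (4 * τ ^ 2))) (Set.Ioc 0 b) := by
  set c : ℝ := 1 - 1/(2*α) + 4*τ^2*α/(1-α) with hc_def
  apply strictAntiOn_of_deriv_neg (convex_Ioc 0 b)
  · intro y hy
    exact ((fDeriv α τ y hα0 hα1 hτ hy.1).continuousAt).continuousWithinAt
  · rw [interior_Ioc]
    intro y hy
    have hy0 : 0 < y := hy.1
    rw [(fDeriv α τ y hα0 hα1 hτ hy0).deriv]
    have h12 : (0:ℝ) < 1 - 2*α := by linarith
    have hpos : (0:ℝ) < (1-2*α) * (2*α) * (1/(4*τ^2)) * y^(-(2*α)-1) := by positivity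
    have hneg : c * y - 1 < 0 := by
      rcases le_or_gt c 0 with h | h
      · nlinarith [hy.1]
      · nlinarith [hy.2, hy.1]
    exact mul_neg_of_pos_of_neg hpos hneg

lemma fMono (α τ b : ℝ) (hα0 : 0 < α) (hα1 : α < 1/2) (hτ : 0 < τ) (hb : 0 < b) (hb1 : b ≤ 1)
    (hcb : 1 ≤ (1 - 1/(2*α) + 4*τ^2*α/(1-α)) * b) :
    StrictMonoOn (fun y : ℝ => (1 - 2 * α) * ((1 + 1 / (1 - 2 * α) - 2 / (1 - α) - 1 / (4 * τ ^ 2)) *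
          y ^ (1 - 2 * α) + y ^ (-(2 * α)) / (4 * τ ^ 2))) (Set.Icc b 1) := by
  set c : ℝ := 1 - 1/(2*α) + 4*τ^2*α/(1-α) with hc_def
  have hc0 : 0 < c := by nlinarith
  apply strictMonoOn_of_deriv_pos (convex_Icc b 1)
  · intro y hy
    exact ((fDeriv α τ y hα0 hα1 hτ (lt_of_lt_of_le hb hy.1)).continuousAt).continuousWithinAt
  · rw [interior_Icc]
    intro y hy
    have hy0 : 0 < y := lt_of_lt_of_le hb (le_of_lt hy.1)
    rw [(fDeriv α τ y hα0 hα1 hτ hy0).deriv]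
    have h12 : (0:ℝ) < 1 - 2*α := by linarith
    have hpos : (0:ℝ) < (1-2*α) * (2*α) * (1/(4*τ^2)) * y^(-(2*α)-1) := by positivity
    have hneg : 0 < c * y - 1 := by nlinarith [hy.1]
    exact mul_pos hpos hneg

lemma fval1 (α τ : ℝ) (hα0 : 0 < α) (hα1 : α < 1/2) (hτ : 0 < τ) :
    (1 - 2 * α) * ((1 + 1 / (1 - 2 * α) - 2 / (1 - α) - 1 / (4 * τ ^ 2)) *
          (1:ℝ) ^ (1 - 2 * α) + (1:ℝ) ^ (-(2 * α)) / (4 * τ ^ 2)) = 2 * α ^ 2 / (1 - α) := by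
  rw [Real.one_rpow, Real.one_rpow]
  have h1 : (1:ℝ) - 2*α ≠ 0 := by intro h; linarith
  have h2 : (1:ℝ) - α ≠ 0 := by intro h; linarith
  have h3 : (4:ℝ)*τ^2 ≠ 0 := by positivity
  field_simp
  ring

lemma fvalstar (α τ : ℝ) (hα0 : 0 < α) (hα1 : α < 1/2) (hτ : 0 < τ)
    (hc : 0 < 1 - 1/(2*α) + 4*τ^2*α/(1-α)) :
    (1 - 2 * α) * ((1 + 1 / (1 - 2 * α) - 2 / (1 - α) - 1 / (4 * τ ^ 2)) *
          ((1 - 1/(2*α) + 4*τ^2*α/(1-α))⁻¹) ^ (1 - 2 * α)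
        + ((1 - 1/(2*α) + 4*τ^2*α/(1-α))⁻¹) ^ (-(2 * α)) / (4 * τ ^ 2))
      = (1 - 1/(2*α) + 4*τ^2*α/(1-α)) ^ (2*α) / (4 * τ ^ 2) := by
  have h1' : ((1 - 1/(2*α) + 4*τ^2*α/(1-α))⁻¹) ^ (-(2*α))
      = (1 - 1/(2*α) + 4*τ^2*α/(1-α)) ^ (2*α) := by
    rw [Real.inv_rpow hc.le, Real.rpow_neg hc.le, inv_inv]
  have h2' : ((1 - 1/(2*α) + 4*τ^2*α/(1-α))⁻¹) ^ (1-2*α)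
      = (1 - 1/(2*α) + 4*τ^2*α/(1-α)) ^ (2*α) / (1 - 1/(2*α) + 4*τ^2*α/(1-α)) := by
    rw [Real.inv_rpow hc.le, show (1:ℝ)-2*α = 1 + -(2*α) by ring, Real.rpow_add hc,
      Real.rpow_one, Real.rpow_neg hc.le]
    field_simp
  rw [h1', h2']
  generalize (1 - 1/(2*α) + 4*τ^2*α/(1-α)) ^ (2*α) = u
  have h1 : (1:ℝ) - 2*α ≠ 0 := by intro h; linarith
  have h2 : (1:ℝ) - α ≠ 0 := by intro h; linarith
  have h3 : (4:ℝ)*τ^2 ≠ 0 := by positivity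
  have h4 : α ≠ 0 := ne_of_gt hα0
  have hD : (0:ℝ) < 2*α*(1-α) := by nlinarith
  have hw : 1 - 1/(2*α) + 4*τ^2*α/(1-α)
      = (2*α*(1-α) - (1-α) + 8*τ^2*α^2)/(2*α*(1-α)) := by
    field_simp; ring
  have hN : (0:ℝ) < 2*α*(1-α) - (1-α) + 8*τ^2*α^2 := by
    have h5 := mul_pos hc hD
    rw [hw, div_mul_cancel₀ _ (ne_of_gt hD)] at h5
    exact h5
  have hN' : -1 + α * 3 - α ^ 2 * 2 + α ^ 2 * τ ^ 2 * 8 ≠ 0 := by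
    intro h; linarith [hN]
  rw [hw]
  field_simp
  ring_nf
  set N := -1 + α * 3 - α ^ 2 * 2 + α ^ 2 * τ ^ 2 * 8 with hNdef
  field_simp
  rw [hNdef]
  ring

end Stmt15Aux

open Stmt15Aux Real in
/-- α < 1/2 case of the sign-descent scaling law: the normalized loss with
`T = τ` and `φ = d·x` converges to `f_τ(x)`, and the minimum of `f_τ` over
`(0,1]` is at `x = 1` if `4τ² ≤ (1−α)/(2α²)` and otherwise uniquely at
`x* = (1 − 1/(2α) + 4τ²α/(1−α))⁻¹`. -/
theorem stmt15 (α τ : ℝ) (hα0 : 0 < α) (hα1 : α < 1/2) (hτ : 0 < τ) :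
    let r : ℕ → ℝ → ℝ → ℝ := fun d T φ =>
      ((∑ k ∈ Finset.Icc 1 ⌊φ⌋₊, ((k : ℝ) ^ (-α) - φ ^ (-α)) ^ 2) +
        ∑ k ∈ Finset.Icc (⌊φ⌋₊ + 1) d, φ ^ (-(2 * α)) / (4 * T ^ 2)) /
      (∑ k ∈ Finset.Icc 1 d, (k : ℝ) ^ (-(2 * α)))
    let f : ℝ → ℝ := fun x =>
      (1 - 2 * α) * ((1 + 1 / (1 - 2 * α) - 2 / (1 - α) - 1 / (4 * τ ^ 2)) *
          x ^ (1 - 2 * α) + x ^ (-(2 * α)) / (4 * τ ^ 2))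
    (∀ x ∈ Set.Ioc (0 : ℝ) 1,
      Tendsto (fun d : ℕ => r d τ ((d : ℝ) * x)) atTop (nhds (f x))) ∧
    (4 * τ ^ 2 ≤ (1 - α) / (2 * α ^ 2) →
      (∀ x ∈ Set.Ioc (0 : ℝ) 1, f 1 ≤ f x) ∧ f 1 = 2 * α ^ 2 / (1 - α)) ∧
    ((1 - α) / (2 * α ^ 2) < 4 * τ ^ 2 →
      let xstar : ℝ := (1 - 1 / (2 * α) + 4 * τ ^ 2 * α / (1 - α))⁻¹
      xstar ∈ Set.Ioc (0 : ℝ) 1 ∧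
      (∀ x ∈ Set.Ioc (0 : ℝ) 1, f xstar ≤ f x) ∧
      (∀ x ∈ Set.Ioc (0 : ℝ) 1, f x = f xstar → x = xstar) ∧
      f xstar = (1 - 1 / (2 * α) + 4 * τ ^ 2 * α / (1 - α)) ^ (2 * α) / (4 * τ ^ 2)) := by
  intro r f
  have h12 : (0:ℝ) < 1 - 2*α := by linarith
  have h1α : (0:ℝ) < 1 - α := by linarith
  refine ⟨?_, ?_, ?_⟩
  · intro x hx
    exact part1 α τ x hα0 hα1 hτ hx.1 hx.2
  · intro hcond
    rw [le_div_iff₀ (by positivity)] at hcond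
    have hc1 : (1 - 1/(2*α) + 4*τ^2*α/(1-α)) * 1 ≤ 1 := by
      rw [mul_one]
      have h5 : 4*τ^2*α/(1-α) ≤ 1/(2*α) := by
        rw [div_le_div_iff₀ h1α (by positivity)]
        nlinarith
      linarith
    have hanti := fAnti α τ 1 hα0 hα1 hτ one_pos hc1
    constructor
    · intro x hx
      rcases eq_or_lt_of_le hx.2 with h | h
      · rw [h]
      · exact le_of_lt (hanti hx (Set.right_mem_Ioc.mpr one_pos) h)
    · exact fval1 α τ hα0 hα1 hτ
  · intro hcond
    intro xstar
    rw [div_lt_iff₀ (by positivity)] at hcond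
    have hc1 : 1 < 1 - 1/(2*α) + 4*τ^2*α/(1-α) := by
      have h5 : 1/(2*α) < 4*τ^2*α/(1-α) := by
        rw [div_lt_div_iff₀ (by positivity) h1α]
        nlinarith
      linarith
    have hc0 : (0:ℝ) < 1 - 1/(2*α) + 4*τ^2*α/(1-α) := by linarith
    have hxs0 : 0 < xstar := inv_pos.mpr hc0
    have hxs1 : xstar ≤ 1 := inv_le_one_of_one_le₀ hc1.le
    have hmem : xstar ∈ Set.Ioc (0:ℝ) 1 := ⟨hxs0, hxs1⟩
    have hcc : (1 - 1/(2*α) + 4*τ^2*α/(1-α)) * xstar = 1 :=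
      mul_inv_cancel₀ (ne_of_gt hc0)
    have hanti := fAnti α τ xstar hα0 hα1 hτ hxs0 hcc.le
    have hmono := fMono α τ xstar hα0 hα1 hτ hxs0 hxs1 hcc.ge
    have hmin : ∀ x ∈ Set.Ioc (0:ℝ) 1, x ≠ xstar → f xstar < f x := by
      intro x hx hne
      rcases lt_or_gt_of_ne hne with h | h
      · exact hanti ⟨hx.1, h.le⟩ ⟨hxs0, le_refl _⟩ h
      · exact hmono ⟨le_refl _, hxs1⟩ ⟨h.le, hx.2⟩ h
    refine ⟨hmem, ?_, ?_, ?_⟩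
    · intro x hx
      rcases eq_or_ne x xstar with h | h
      · rw [h]
      · exact (hmin x hx h).le
    · intro x hx hfx
      by_contra h
      exact (hmin x hx h).ne' hfx
    · exact fvalstar α τ hα0 hα1 hτ hc0
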